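/- arXiv:1912.08570 — 9 statements merged into one kernel-verified Lean document; each statement's English description precedes it below -/
import Mathlib

section
/- Let m be a nonzero integer, S an open subset of {(ρ,z) ∈ ℝ² : ρ > 0}, and u : S → ℝ continuously differentiable on S. Then at every point of S one has η_{m,1}(grad^m u) = G(η_{m,0}(u)); explicitly, (1/ρ)(m ∂_ρ u − (m/ρ) u) = ∂_ρ((m/ρ) u), (m/ρ) ∂_z u = ∂_z((m/ρ) u), and both third components equal −(m/ρ) u. (Gradient part of the lemma stating that the operators η_{m,k} intertwine the mode-m cylindrical operators with the Cartesian operators.) -/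
/-- Partial derivative in the first (ρ) direction. -/
noncomputable def pdRho (f : ℝ × ℝ → ℝ) (p : ℝ × ℝ) : ℝ := fderiv ℝ f p (1, 0)

/-- Partial derivative in the second (z) direction. -/
noncomputable def pdZ (f : ℝ × ℝ → ℝ) (p : ℝ × ℝ) : ℝ := fderiv ℝ f p (0, 1)

/-- Gradient part of the intertwining lemma: `η_{m,1}(grad^m u) = G(η_{m,0}(u))`. -/
theorem eta_intertwines_grad (m : ℤ) (hm : m ≠ 0) (S : Set (ℝ × ℝ)) (hS : IsOpen S)
    (hSpos : ∀ p ∈ S, 0 < p.1) (u : ℝ × ℝ → ℝ) (hu : ContDiffOn ℝ 1 u S) :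
    ∀ q ∈ S,
      ((1 / q.1) * ((m : ℝ) * pdRho u q - ((m : ℝ) / q.1) * u q),
        ((m : ℝ) / q.1) * pdZ u q,
        -(((m : ℝ) / q.1) * u q))
      = (pdRho (fun p => ((m : ℝ) / p.1) * u p) q,
         pdZ (fun p => ((m : ℝ) / p.1) * u p) q,
         -(((m : ℝ) / q.1) * u q)) := by
  intro q hq
  have hq0 : q.1 ≠ 0 := ne_of_gt (hSpos q hq)
  have hud : DifferentiableAt ℝ u q :=
    ((hu.differentiableOn one_ne_zero).differentiableAt (hS.mem_nhds hq))
  have hu' : HasFDerivAt u (fderiv ℝ u q) q := hud.hasFDerivAt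
  have h1 : HasDerivAt (fun x : ℝ => (m : ℝ) / x) (-((m : ℝ) / q.1 ^ 2)) q.1 := by
    simpa [div_eq_mul_inv, mul_comm, mul_assoc] using (hasDerivAt_inv hq0).const_mul (m : ℝ)
  have hf : HasFDerivAt (fun p : ℝ × ℝ => (m : ℝ) / p.1)
      ((-((m : ℝ) / q.1 ^ 2)) • ContinuousLinearMap.fst ℝ ℝ ℝ) q :=
    h1.comp_hasFDerivAt q hasFDerivAt_fst
  have hmul : HasFDerivAt (fun p : ℝ × ℝ => ((m : ℝ) / p.1) * u p)
      (((m : ℝ) / q.1) • fderiv ℝ u q +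
        u q • ((-((m : ℝ) / q.1 ^ 2)) • ContinuousLinearMap.fst ℝ ℝ ℝ)) q :=
    hf.mul hu'
  have hfd := hmul.fderiv
  have hrho : pdRho (fun p => ((m : ℝ) / p.1) * u p) q
      = ((m : ℝ) / q.1) * pdRho u q + u q * (-((m : ℝ) / q.1 ^ 2)) := by
    simp [pdRho, hfd]
  have hz : pdZ (fun p => ((m : ℝ) / p.1) * u p) q = ((m : ℝ) / q.1) * pdZ u q := by
    simp [pdZ, hfd]
  rw [hrho, hz]
  refine Prod.ext ?_ rfl
  simp only
  field_simp
  ring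
end

section
/- Let m be a nonzero integer, S an open subset of {(ρ,z) ∈ ℝ² : ρ > 0}, and u = (u_ρ, u_z, u_θ) : S → ℝ³ continuously differentiable on S. Then at every point of S one has η_{m,2}(curl^m u) = C(η_{m,1}(u)); explicitly, the vector (−(m/ρ) u_z − ∂_z u_θ, (1/ρ)(u_θ + m u_ρ) + ∂_ρ u_θ, −∂_ρ((m/ρ) u_z) + ∂_z((1/ρ)(m u_ρ + u_θ))) equals C applied to ((1/ρ)(m u_ρ + u_θ), (m/ρ) u_z, u_θ). (Curl part of the lemma stating that the operators η_{m,k} intertwine the mode-m cylindrical operators with the Cartesian operators.) -/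
/-- Curl part of the intertwining lemma: `η_{m,2}(curl^m u) = C(η_{m,1}(u))`. -/
theorem eta_intertwines_curl (m : ℤ) (hm : m ≠ 0) (S : Set (ℝ × ℝ)) (hS : IsOpen S)
    (hSpos : ∀ p ∈ S, 0 < p.1) (u1 u2 u3 : ℝ × ℝ → ℝ)
    (hu1 : ContDiffOn ℝ 1 u1 S) (hu2 : ContDiffOn ℝ 1 u2 S) (hu3 : ContDiffOn ℝ 1 u3 S) :
    ∀ q ∈ S,
      -- η_{m,2} applied to curl^m (u1, u2, u3)
      (-(((m : ℝ) / q.1) * u2 q) - pdZ u3 q,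
        (1 / q.1) * (pdRho (fun p => p.1 * u3 p) q + (m : ℝ) * u1 q),
        (1 / q.1) * ((m : ℝ) * (pdZ u1 q - pdRho u2 q)
          - (-(((m : ℝ) / q.1) * u2 q) - pdZ u3 q)))
      -- C applied to η_{m,1}(u1, u2, u3)
      = (-(((m : ℝ) / q.1) * u2 q) - pdZ u3 q,
         (1 / q.1) * ((m : ℝ) * u1 q + u3 q) + pdRho u3 q,
         pdZ (fun p => (1 / p.1) * ((m : ℝ) * u1 p + u3 p)) q
           - pdRho (fun p => ((m : ℝ) / p.1) * u2 p) q) := by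
  intro q hqS
  have hq : 0 < q.1 := hSpos q hqS
  have hmem := hS.mem_nhds hqS
  have h1 : HasFDerivAt u1 (fderiv ℝ u1 q) q :=
    (((hu1.contDiffAt hmem).differentiableAt one_ne_zero)).hasFDerivAt
  have h2 : HasFDerivAt u2 (fderiv ℝ u2 q) q :=
    (((hu2.contDiffAt hmem).differentiableAt one_ne_zero)).hasFDerivAt
  have h3 : HasFDerivAt u3 (fderiv ℝ u3 q) q :=
    (((hu3.contDiffAt hmem).differentiableAt one_ne_zero)).hasFDerivAt
  set D1 := fderiv ℝ u1 q with hD1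
  set D2 := fderiv ℝ u2 q with hD2
  set D3 := fderiv ℝ u3 q with hD3
  have hfst : HasFDerivAt (fun p : ℝ × ℝ => p.1)
      (ContinuousLinearMap.fst ℝ ℝ ℝ) q := hasFDerivAt_fst
  have hinv : HasFDerivAt (fun p : ℝ × ℝ => (p.1)⁻¹)
      ((-(q.1 ^ 2)⁻¹ : ℝ) • ContinuousLinearMap.fst ℝ ℝ ℝ) q := by
    have h := (hasDerivAt_inv hq.ne').comp_hasFDerivAt q hfst
    exact h
  -- pdRho (fun p => p.1 * u3 p)
  have hA : HasFDerivAt (fun p : ℝ × ℝ => p.1 * u3 p)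
      (q.1 • D3 + u3 q • ContinuousLinearMap.fst ℝ ℝ ℝ) q := hfst.mul h3
  -- the function (1/p.1) * (m*u1 + u3)
  have hinner : HasFDerivAt (fun p : ℝ × ℝ => (m : ℝ) * u1 p + u3 p)
      ((m : ℝ) • D1 + D3) q := (h1.const_mul (m : ℝ)).add h3
  have hinv' : HasFDerivAt (fun p : ℝ × ℝ => 1 / p.1)
      ((-(q.1 ^ 2)⁻¹ : ℝ) • ContinuousLinearMap.fst ℝ ℝ ℝ) q := by
    simpa [one_div] using hinv
  have hB : HasFDerivAt (fun p : ℝ × ℝ => (1 / p.1) * ((m : ℝ) * u1 p + u3 p))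
      ((1 / q.1) • ((m : ℝ) • D1 + D3)
        + ((m : ℝ) * u1 q + u3 q) • ((-(q.1 ^ 2)⁻¹ : ℝ) • ContinuousLinearMap.fst ℝ ℝ ℝ)) q :=
    hinv'.mul hinner
  have hdivm : HasFDerivAt (fun p : ℝ × ℝ => (m : ℝ) / p.1)
      ((m : ℝ) • ((-(q.1 ^ 2)⁻¹ : ℝ) • ContinuousLinearMap.fst ℝ ℝ ℝ)) q := by
    simpa [div_eq_mul_inv, mul_comm] using hinv.const_mul (m : ℝ)
  have hC : HasFDerivAt (fun p : ℝ × ℝ => ((m : ℝ) / p.1) * u2 p)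
      (((m : ℝ) / q.1) • D2
        + u2 q • ((m : ℝ) • ((-(q.1 ^ 2)⁻¹ : ℝ) • ContinuousLinearMap.fst ℝ ℝ ℝ))) q :=
    hdivm.mul h2
  have eA : pdRho (fun p : ℝ × ℝ => p.1 * u3 p) q = q.1 * D3 (1, 0) + u3 q := by
    rw [pdRho, hA.fderiv]; simp
  have eB : pdZ (fun p : ℝ × ℝ => (1 / p.1) * ((m : ℝ) * u1 p + u3 p)) q
      = (1 / q.1) * ((m : ℝ) * D1 (0, 1) + D3 (0, 1)) := by
    rw [pdZ, hB.fderiv]; simp; ring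
  have eC : pdRho (fun p : ℝ × ℝ => ((m : ℝ) / p.1) * u2 p) q
      = ((m : ℝ) / q.1) * D2 (1, 0) + u2 q * ((m : ℝ) * (-(q.1 ^ 2)⁻¹)) := by
    rw [pdRho, hC.fderiv]; simp
  have hq0 : q.1 ≠ 0 := hq.ne'
  have eρ3 : pdRho u3 q = D3 (1, 0) := rfl
  have ez1 : pdZ u1 q = D1 (0, 1) := rfl
  have ez3 : pdZ u3 q = D3 (0, 1) := rfl
  have eρ2 : pdRho u2 q = D2 (1, 0) := rfl
  refine Prod.ext rfl (Prod.ext ?_ ?_)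
  · rw [eA, eρ3]
    field_simp
    ring
  · rw [eA, eB, eC, ez1, ez3, eρ2]
    field_simp
    ring
end

section
/- Let m be a nonzero integer, S an open subset of {(ρ,z) ∈ ℝ² : ρ > 0}, and ṽ = (ṽ₁, ṽ₂, ṽ₃) : S → ℝ³ continuously differentiable on S. Then at every point of S, curl^m(η_{m,1}^{-1}(ṽ)) = (−ṽ₂ − ∂_z ṽ₃, ṽ₁ + ∂_ρ ṽ₃, (1/m)(ρ ∂_z ṽ₁ − ∂_ρ(ρ ṽ₂) − ∂_z ṽ₃)), and this vector equals η_{m,2}^{-1}(C(ṽ)). (Curl part of the lemma stating that the inverse maps η_{m,k}^{-1} intertwine the Cartesian operators with the mode-m cylindrical operators.) -/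
lemma pdRho_fstmul (f : ℝ × ℝ → ℝ) (q : ℝ × ℝ) (hf : DifferentiableAt ℝ f q) :
    pdRho (fun p => p.1 * f p) q = f q + q.1 * pdRho f q := by
  unfold pdRho
  rw [fderiv_fun_mul differentiableAt_fst hf]
  simp [fderiv_fst]; ring

lemma pdZ_fstmul (f : ℝ × ℝ → ℝ) (q : ℝ × ℝ) (hf : DifferentiableAt ℝ f q) :
    pdZ (fun p => p.1 * f p) q = q.1 * pdZ f q := by
  unfold pdZ
  rw [fderiv_fun_mul differentiableAt_fst hf]
  simp [fderiv_fst]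

lemma pdRho_div_const (f : ℝ × ℝ → ℝ) (q : ℝ × ℝ) (c : ℝ)
    (hf : DifferentiableAt ℝ f q) :
    pdRho (fun p => f p / c) q = pdRho f q / c := by
  unfold pdRho
  simp only [div_eq_inv_mul]
  rw [fderiv_const_mul hf]
  simp

lemma pdZ_div_const (f : ℝ × ℝ → ℝ) (q : ℝ × ℝ) (c : ℝ)
    (hf : DifferentiableAt ℝ f q) :
    pdZ (fun p => f p / c) q = pdZ f q / c := by
  unfold pdZ
  simp only [div_eq_inv_mul]
  rw [fderiv_const_mul hf]
  simp

lemma pdZ_sub (f g : ℝ × ℝ → ℝ) (q : ℝ × ℝ) (hf : DifferentiableAt ℝ f q)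
    (hg : DifferentiableAt ℝ g q) :
    pdZ (fun p => f p - g p) q = pdZ f q - pdZ g q := by
  unfold pdZ
  rw [fderiv_fun_sub hf hg]
  simp

/-- Curl part of the inverse intertwining lemma:
`curl^m(η_{m,1}^{-1}(ṽ))` equals the explicit vector, which equals `η_{m,2}^{-1}(C(ṽ))`. -/
theorem eta_inv_intertwines_curl (m : ℤ) (hm : m ≠ 0) (S : Set (ℝ × ℝ)) (hS : IsOpen S)
    (hSpos : ∀ p ∈ S, 0 < p.1) (v1 v2 v3 : ℝ × ℝ → ℝ)
    (hv1 : ContDiffOn ℝ 1 v1 S) (hv2 : ContDiffOn ℝ 1 v2 S) (hv3 : ContDiffOn ℝ 1 v3 S) :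
    ∀ q ∈ S,
      -- curl^m applied to η_{m,1}^{-1}(v1, v2, v3) equals the explicit vector
      ((-(((m : ℝ) / q.1) * (q.1 / (m : ℝ) * v2 q)) - pdZ v3 q,
        (1 / q.1) * (pdRho (fun p => p.1 * v3 p) q
          + (m : ℝ) * ((q.1 * v1 q - v3 q) / (m : ℝ))),
        pdZ (fun p => (p.1 * v1 p - v3 p) / (m : ℝ)) q
          - pdRho (fun p => p.1 / (m : ℝ) * v2 p) q)
      = (-(v2 q) - pdZ v3 q,
         v1 q + pdRho v3 q,
         (1 / (m : ℝ)) * (q.1 * pdZ v1 q - pdRho (fun p => p.1 * v2 p) q - pdZ v3 q)))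
      -- and the explicit vector equals η_{m,2}^{-1}(C(v1, v2, v3))
      ∧ ((-(v2 q) - pdZ v3 q,
          v1 q + pdRho v3 q,
          (1 / (m : ℝ)) * (q.1 * pdZ v1 q - pdRho (fun p => p.1 * v2 p) q - pdZ v3 q))
      = (-(v2 q) - pdZ v3 q,
         v1 q + pdRho v3 q,
         (q.1 * (pdZ v1 q - pdRho v2 q) + (-(v2 q) - pdZ v3 q)) / (m : ℝ))) := by
  intro q hq
  have d1 : DifferentiableAt ℝ v1 q :=
    (hv1.differentiableOn one_ne_zero).differentiableAt (hS.mem_nhds hq)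
  have d2 : DifferentiableAt ℝ v2 q :=
    (hv2.differentiableOn one_ne_zero).differentiableAt (hS.mem_nhds hq)
  have d3 : DifferentiableAt ℝ v3 q :=
    (hv3.differentiableOn one_ne_zero).differentiableAt (hS.mem_nhds hq)
  have hρ : q.1 ≠ 0 := (hSpos q hq).ne'
  have hmr : (m : ℝ) ≠ 0 := Int.cast_ne_zero.mpr hm
  have e1 : pdRho (fun p => p.1 * v3 p) q = v3 q + q.1 * pdRho v3 q := pdRho_fstmul v3 q d3
  have e2 : pdZ (fun p => (p.1 * v1 p - v3 p) / (m : ℝ)) q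
      = (q.1 * pdZ v1 q - pdZ v3 q) / (m : ℝ) := by
    rw [pdZ_div_const _ _ _ ((differentiableAt_fst.fun_mul d1).fun_sub d3), pdZ_sub _ _ _ (differentiableAt_fst.fun_mul d1) d3, pdZ_fstmul v1 q d1]
  have e3 : pdRho (fun p => p.1 / (m : ℝ) * v2 p) q
      = (v2 q + q.1 * pdRho v2 q) / (m : ℝ) := by
    have : (fun p : ℝ × ℝ => p.1 / (m : ℝ) * v2 p) = fun p => p.1 * v2 p / (m : ℝ) := by
      funext p; ring
    rw [this, pdRho_div_const _ _ _ (differentiableAt_fst.fun_mul d2), pdRho_fstmul v2 q d2]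
  have e4 : pdRho (fun p => p.1 * v2 p) q = v2 q + q.1 * pdRho v2 q := pdRho_fstmul v2 q d2
  refine ⟨?_, ?_⟩
  · rw [e1, e2, e3, e4]
    refine Prod.ext ?_ (Prod.ext ?_ ?_) <;> field_simp <;> ring
  · rw [e4]
    refine Prod.ext rfl (Prod.ext rfl ?_)
    field_simp; ring
end

section
/- Let m be a nonzero integer, S an open subset of {(ρ,z) ∈ ℝ² : ρ > 0}, and ṽ = (ṽ₁, ṽ₂, ṽ₃) : S → ℝ³ with ṽ₁, ṽ₂ continuously differentiable on S. Then at every point of S, div^m(η_{m,2}^{-1}(ṽ)) = ∂_ρ ṽ₁ − ṽ₃ + ∂_z ṽ₂ = D(ṽ). (Divergence part of the lemma stating that the inverse maps η_{m,k}^{-1} intertwine the Cartesian operators with the mode-m cylindrical operators.) -/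
/-- Divergence part of the inverse intertwining lemma:
`div^m(η_{m,2}^{-1}(ṽ)) = ∂_ρ ṽ₁ − ṽ₃ + ∂_z ṽ₂ = D(ṽ)`. -/
theorem eta_inv_intertwines_div (m : ℤ) (hm : m ≠ 0) (S : Set (ℝ × ℝ)) (hS : IsOpen S)
    (hSpos : ∀ p ∈ S, 0 < p.1) (v1 v2 v3 : ℝ × ℝ → ℝ)
    (hv1 : ContDiffOn ℝ 1 v1 S) (hv2 : ContDiffOn ℝ 1 v2 S) :
    ∀ q ∈ S,
      ((1 / q.1) * pdRho (fun p => p.1 * v1 p) q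
          - ((m : ℝ) / q.1) * ((q.1 * v3 q + v1 q) / (m : ℝ)) + pdZ v2 q
        = pdRho v1 q - v3 q + pdZ v2 q)
      ∧ (pdRho v1 q - v3 q + pdZ v2 q = pdRho v1 q + pdZ v2 q - v3 q) := by
  intro q hq
  have hq1 : q.1 ≠ 0 := ne_of_gt (hSpos q hq)
  have hdv1 : DifferentiableAt ℝ v1 q :=
    (hv1.contDiffAt (hS.mem_nhds hq)).differentiableAt one_ne_zero
  have hfst : DifferentiableAt ℝ (fun p : ℝ × ℝ => p.1) q := differentiableAt_fst
  have hprod : fderiv ℝ (fun p : ℝ × ℝ => p.1 * v1 p) q (1, 0)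
      = v1 q + q.1 * fderiv ℝ v1 q (1, 0) := by
    rw [fderiv_fun_mul hfst hdv1]
    have : fderiv ℝ (fun p : ℝ × ℝ => p.1) q (1, 0) = 1 := by
      rw [fderiv_fst]; rfl
    simp [this]
    ring
  constructor
  · show (1 / q.1) * fderiv ℝ (fun p : ℝ × ℝ => p.1 * v1 p) q (1, 0) - _ + _ = _
    rw [hprod]
    have hm' : (m : ℝ) ≠ 0 := Int.cast_ne_zero.mpr hm
    unfold pdRho pdZ
    field_simp
    ring
  · ring
end

section
/- Let m be a nonzero integer, S an open subset of {(ρ,z) ∈ ℝ² : ρ > 0}, and u = (u_ρ, u_z, u_θ) : S → ℝ³ continuously differentiable on S with curl^m u = 0 at every point of S. Then u = grad^m(v) on S, where v = −(ρ/m) u_θ; explicitly, u_ρ = ∂_ρ(−(ρ/m) u_θ), u_z = ∂_z(−(ρ/m) u_θ), and u_θ = −(m/ρ)(−(ρ/m) u_θ). (Exactness at the second stage of the mode-m cylindrical sequence: every curl^m-free vector field is a mode-m gradient.) -/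
/-- Exactness at the second stage: every `curl^m`-free vector field is a mode-m gradient,
namely `u = grad^m(−(ρ/m) u_θ)`. -/
theorem curlm_free_is_gradm (m : ℤ) (hm : m ≠ 0) (S : Set (ℝ × ℝ)) (hS : IsOpen S)
    (hSpos : ∀ p ∈ S, 0 < p.1) (u1 u2 u3 : ℝ × ℝ → ℝ)
    (hu1 : ContDiffOn ℝ 1 u1 S) (hu2 : ContDiffOn ℝ 1 u2 S) (hu3 : ContDiffOn ℝ 1 u3 S)
    (hcurl : ∀ q ∈ S,
      (-(((m : ℝ) / q.1) * u2 q) - pdZ u3 q,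
        (1 / q.1) * (pdRho (fun p => p.1 * u3 p) q + (m : ℝ) * u1 q),
        pdZ u1 q - pdRho u2 q)
      = ((0 : ℝ), (0 : ℝ), (0 : ℝ))) :
    ∀ q ∈ S,
      u1 q = pdRho (fun p => -(p.1 / (m : ℝ)) * u3 p) q
      ∧ u2 q = pdZ (fun p => -(p.1 / (m : ℝ)) * u3 p) q
      ∧ u3 q = -(((m : ℝ) / q.1) * (-(q.1 / (m : ℝ)) * u3 q)) := by
  intro q hq
  have hρ : 0 < q.1 := hSpos q hq
  have hρ0 : q.1 ≠ 0 := ne_of_gt hρ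
  have hm0 : (m : ℝ) ≠ 0 := Int.cast_ne_zero.mpr hm
  have hd3 : DifferentiableAt ℝ u3 q :=
    (hu3.contDiffAt (hS.mem_nhds hq)).differentiableAt one_ne_zero
  have hdfst : DifferentiableAt ℝ (fun p : ℝ × ℝ => p.1) q :=
    differentiable_fst.differentiableAt
  have hg : DifferentiableAt ℝ (fun p : ℝ × ℝ => p.1 * u3 p) q := hdfst.mul hd3
  have hcq := hcurl q hq
  have h1 : -(((m : ℝ) / q.1) * u2 q) - pdZ u3 q = 0 := by
    have := congrArg Prod.fst hcq; simpa using this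
  have h2 : (1 / q.1) * (pdRho (fun p => p.1 * u3 p) q + (m : ℝ) * u1 q) = 0 := by
    have := congrArg (fun x : ℝ × ℝ × ℝ => x.2.1) hcq; simpa using this
  have hfeq : (fun p : ℝ × ℝ => -(p.1 / (m : ℝ)) * u3 p)
      = fun p : ℝ × ℝ => (-(1 / (m : ℝ))) * (p.1 * u3 p) := by
    funext p; ring
  have hfst : fderiv ℝ (fun p : ℝ × ℝ => p.1) q = ContinuousLinearMap.fst ℝ ℝ ℝ := by
    exact fderiv_fst
  have hmul : ∀ v : ℝ × ℝ, fderiv ℝ (fun p : ℝ × ℝ => p.1 * u3 p) q v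
      = q.1 * fderiv ℝ u3 q v + u3 q * v.1 := by
    intro v
    rw [fderiv_fun_mul hdfst hd3]
    simp [hfst]
  have hfr : pdRho (fun p : ℝ × ℝ => -(p.1 / (m : ℝ)) * u3 p) q
      = (-(1 / (m : ℝ))) * pdRho (fun p : ℝ × ℝ => p.1 * u3 p) q := by
    rw [hfeq]
    unfold pdRho
    rw [fderiv_const_mul hg]
    simp
  have hfz : pdZ (fun p : ℝ × ℝ => -(p.1 / (m : ℝ)) * u3 p) q
      = (-(q.1 / (m : ℝ))) * pdZ u3 q := by
    rw [hfeq]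
    unfold pdZ
    rw [fderiv_const_mul hg]
    simp only [ContinuousLinearMap.smul_apply, smul_eq_mul]
    rw [show (fderiv ℝ (fun p : ℝ × ℝ => p.1 * u3 p) q) (0, 1)
        = pdZ (fun p : ℝ × ℝ => p.1 * u3 p) q from rfl, show pdZ (fun p : ℝ × ℝ => p.1 * u3 p) q
        = q.1 * pdZ u3 q + u3 q * 0 from hmul (0,1)]
    unfold pdZ
    ring
  have h2' : pdRho (fun p : ℝ × ℝ => p.1 * u3 p) q + (m : ℝ) * u1 q = 0 := by
    have h := mul_eq_zero.mp h2
    rcases h with h | h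
    · exact absurd h (by positivity)
    · exact h
  refine ⟨?_, ?_, ?_⟩
  · rw [hfr]; field_simp at h2' ⊢; linarith
  · rw [hfz]
    have : u2 q = -(q.1 / (m : ℝ)) * pdZ u3 q := by
      field_simp at h1 ⊢; linarith
    linarith [this]
  · field_simp
end

section
/- Let m be a nonzero integer, S an open subset of {(ρ,z) ∈ ℝ² : ρ > 0}, and u = (u_ρ, u_z, u_θ) : S → ℝ³ continuously differentiable on S with div^m u = 0 at every point of S. Then curl^m(w) = u on S, where w = ((ρ/m) u_z, −(ρ/m) u_ρ, 0). (Exactness at the third stage of the mode-m cylindrical sequence: every div^m-free vector field is a mode-m curl.) -/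
/-- Exactness at the third stage: every `div^m`-free vector field is a mode-m curl,
namely `u = curl^m((ρ/m) u_z, −(ρ/m) u_ρ, 0)`. -/
theorem divm_free_is_curlm (m : ℤ) (hm : m ≠ 0) (S : Set (ℝ × ℝ)) (hS : IsOpen S)
    (hSpos : ∀ p ∈ S, 0 < p.1) (u1 u2 u3 : ℝ × ℝ → ℝ)
    (hu1 : ContDiffOn ℝ 1 u1 S) (hu2 : ContDiffOn ℝ 1 u2 S) (hu3 : ContDiffOn ℝ 1 u3 S)
    (hdiv : ∀ q ∈ S,
      (1 / q.1) * pdRho (fun p => p.1 * u1 p) q - ((m : ℝ) / q.1) * u3 q + pdZ u2 q = 0) :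
    ∀ q ∈ S,
      (-(((m : ℝ) / q.1) * (-(q.1 / (m : ℝ)) * u1 q)) - pdZ (fun _ => (0 : ℝ)) q,
        (1 / q.1) * (pdRho (fun p => p.1 * (0 : ℝ)) q + (m : ℝ) * (q.1 / (m : ℝ) * u2 q)),
        pdZ (fun p => p.1 / (m : ℝ) * u2 p) q - pdRho (fun p => -(p.1 / (m : ℝ)) * u1 p) q)
      = (u1 q, u2 q, u3 q) := by
  intro q hq
  have hmR : (m : ℝ) ≠ 0 := Int.cast_ne_zero.mpr hm
  have hρ : q.1 ≠ 0 := (hSpos q hq).ne'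
  have hmem : S ∈ nhds q := hS.mem_nhds hq
  have hd1 : DifferentiableAt ℝ u1 q :=
    ((hu1.differentiableOn one_ne_zero).differentiableAt hmem)
  have hd2 : DifferentiableAt ℝ u2 q :=
    ((hu2.differentiableOn one_ne_zero).differentiableAt hmem)
  have hfst : DifferentiableAt ℝ (fun p : ℝ × ℝ => p.1) q := differentiableAt_fst
  -- first component
  have h1 : pdZ (fun _ => (0 : ℝ)) q = 0 := by
    simp [pdZ]
  -- second component
  have h2 : pdRho (fun p : ℝ × ℝ => p.1 * (0 : ℝ)) q = 0 := by
    simp [pdRho]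
  -- third component pieces
  have hzu2 : pdZ (fun p : ℝ × ℝ => p.1 / (m : ℝ) * u2 p) q
      = q.1 / (m : ℝ) * pdZ u2 q := by
    have hdf : DifferentiableAt ℝ (fun p : ℝ × ℝ => p.1 / (m : ℝ)) q := by
      simpa [div_eq_mul_inv] using hfst.mul_const ((m : ℝ)⁻¹)
    have := fderiv_fun_mul (𝕜 := ℝ) hdf hd2
    simp only [pdZ, this]
    have hff : fderiv ℝ (fun p : ℝ × ℝ => p.1 / (m : ℝ)) q ((0 : ℝ), (1 : ℝ)) = 0 := by
      have : (fun p : ℝ × ℝ => p.1 / (m : ℝ)) = fun p : ℝ × ℝ => p.1 * ((m : ℝ)⁻¹) := by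
        funext p; rw [div_eq_mul_inv]
      rw [this, fderiv_mul_const hfst]
      simp [fderiv_fst]
    simp [hff]
  have hru1 : pdRho (fun p : ℝ × ℝ => -(p.1 / (m : ℝ)) * u1 p) q
      = -(1 / (m : ℝ)) * pdRho (fun p : ℝ × ℝ => p.1 * u1 p) q := by
    have heq : (fun p : ℝ × ℝ => -(p.1 / (m : ℝ)) * u1 p)
        = fun p : ℝ × ℝ => (-(1 / (m : ℝ))) * (p.1 * u1 p) := by
      funext p; ring
    rw [pdRho, heq, fderiv_const_mul (a := fun p : ℝ × ℝ => p.1 * u1 p) (hfst.mul hd1)]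
    simp [pdRho]
  have hdiv' := hdiv q hq
  have h3 : pdZ (fun p : ℝ × ℝ => p.1 / (m : ℝ) * u2 p) q
      - pdRho (fun p : ℝ × ℝ => -(p.1 / (m : ℝ)) * u1 p) q = u3 q := by
    rw [hzu2, hru1]
    have hP : pdRho (fun p : ℝ × ℝ => p.1 * u1 p) q
        = q.1 * (((m : ℝ) / q.1) * u3 q - pdZ u2 q) := by
      field_simp at hdiv' ⊢
      linarith
    rw [hP]
    field_simp
    ring
  rw [h1, h2, h3]
  have e1 : -(((m : ℝ) / q.1) * (-(q.1 / (m : ℝ)) * u1 q)) - 0 = u1 q := by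
    field_simp
    ring
  have e2 : (1 / q.1) * (0 + (m : ℝ) * (q.1 / (m : ℝ) * u2 q)) = u2 q := by
    field_simp
    ring
  rw [e1, e2]
end

section
/- Let m be a nonzero integer with |m| ≥ 1, R > 0, S an open subset of (0,R) × ℝ, and ṽ : S → ℝ continuously differentiable on S. Then, as inequalities of (possibly infinite) Lebesgue integrals of nonnegative measurable functions, ∫_S ((ρ/m) ṽ)² ρ dρ dz ≤ R³ ∫_S ṽ² dρ dz and ∫_S |grad^m((ρ/m) ṽ)|² ρ dρ dz ≤ 3R ∫_S ṽ² dρ dz + 2R³ ∫_S ((∂_ρ ṽ)² + (∂_z ṽ)²) dρ dz, where |·| denotes the Euclidean norm on ℝ³. (Conformity bound for the mode-m scalar space: if ṽ ∈ H¹(S) then η_{m,0}^{-1}(ṽ) = (ρ/m) ṽ lies in the weighted space H_ρ(grad^m; S).) -/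
open MeasureTheory

lemma pd_w (m : ℝ) (v : ℝ × ℝ → ℝ) (p : ℝ × ℝ) (hd : DifferentiableAt ℝ v p) :
    pdRho (fun r => r.1 / m * v r) p = v p / m + p.1 / m * pdRho v p ∧
    pdZ (fun r => r.1 / m * v r) p = p.1 / m * pdZ v p := by
  have h : HasFDerivAt (fun r : ℝ × ℝ => r.1 / m)
      ((1 / m) • (ContinuousLinearMap.fst ℝ ℝ ℝ)) p := by
    have heq : (fun r : ℝ × ℝ => r.1 / m)
        = fun r => ((1 / m) • (ContinuousLinearMap.fst ℝ ℝ ℝ)) r := by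
      funext r; simp [div_eq_inv_mul]
    rw [heq]
    exact ((1 / m) • (ContinuousLinearMap.fst ℝ ℝ ℝ)).hasFDerivAt
  have hf := h.differentiableAt
  have hfd := h.fderiv
  refine ⟨?_, ?_⟩ <;>
  · show (fderiv ℝ (fun r => r.1 / m * v r) p) _ = _
    rw [fderiv_fun_mul hf hd, hfd]
    simp [pdRho, pdZ, div_eq_inv_mul]
    try ring

/-- Conformity bound for the mode-m scalar space: weighted bounds for `(ρ/m) ṽ`
and `grad^m((ρ/m) ṽ)` in terms of unweighted `H¹`-type integrals of `ṽ`. -/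
theorem conformity_scalar (m : ℤ) (hm : m ≠ 0) (hm' : 1 ≤ |m|) (R : ℝ) (hR : 0 < R)
    (S : Set (ℝ × ℝ)) (hS : IsOpen S) (hSsub : ∀ p ∈ S, p.1 ∈ Set.Ioo 0 R)
    (v : ℝ × ℝ → ℝ) (hv : ContDiffOn ℝ 1 v S) :
    (∫⁻ p in S, ENNReal.ofReal ((p.1 / (m : ℝ) * v p) ^ 2 * p.1)
        ≤ ENNReal.ofReal (R ^ 3) * ∫⁻ p in S, ENNReal.ofReal ((v p) ^ 2))
    ∧ (∫⁻ p in S, ENNReal.ofReal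
          (((pdRho (fun r => r.1 / (m : ℝ) * v r) p) ^ 2
            + (pdZ (fun r => r.1 / (m : ℝ) * v r) p) ^ 2
            + (-(((m : ℝ) / p.1) * (p.1 / (m : ℝ) * v p))) ^ 2) * p.1)
        ≤ ENNReal.ofReal (3 * R) * (∫⁻ p in S, ENNReal.ofReal ((v p) ^ 2))
          + ENNReal.ofReal (2 * R ^ 3)
            * ∫⁻ p in S, ENNReal.ofReal ((pdRho v p) ^ 2 + (pdZ v p) ^ 2)) := by
  have hmR : (1 : ℝ) ≤ (m : ℝ) ^ 2 := by
    have : (1 : ℝ) ≤ |(m : ℝ)| := by exact_mod_cast (by exact_mod_cast hm' : (1:ℤ) ≤ |m|)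
    nlinarith [abs_nonneg (m : ℝ), sq_abs (m : ℝ)]
  have hmne : (m : ℝ) ≠ 0 := Int.cast_ne_zero.mpr hm
  constructor
  · -- first part
    rw [← lintegral_const_mul' _ _ (by simp : ENNReal.ofReal (R ^ 3) ≠ ⊤)]
    refine lintegral_mono_ae ((ae_restrict_iff' hS.measurableSet).2 (ae_of_all _ fun p hp => ?_))
    obtain ⟨hp0, hpR⟩ := hSsub p hp
    rw [← ENNReal.ofReal_mul (by positivity)]
    refine ENNReal.ofReal_le_ofReal ?_
    have hkey : (p.1 / (m : ℝ) * v p) ^ 2 = p.1 ^ 2 * (v p) ^ 2 / (m : ℝ) ^ 2 := by ring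
    have h1 : p.1 ^ 2 * (v p) ^ 2 / (m : ℝ) ^ 2 ≤ p.1 ^ 2 * (v p) ^ 2 :=
      div_le_self (by positivity) hmR
    have hp3 : p.1 ^ 3 ≤ R ^ 3 := pow_le_pow_left₀ hp0.le hpR.le 3
    rw [hkey]
    nlinarith [mul_le_mul_of_nonneg_right h1 hp0.le,
      mul_nonneg (sub_nonneg.2 hp3) (sq_nonneg (v p)), sq_nonneg (v p)]
  · -- second part
    set A : ℝ × ℝ → ℝ := fun p => 3 * R * (v p) ^ 2 with hA
    set B : ℝ × ℝ → ℝ := fun p => 2 * R ^ 3 * ((pdRho v p) ^ 2 + (pdZ v p) ^ 2) with hB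
    have hvae : AEMeasurable v (volume.restrict S) :=
      (hv.continuousOn.aemeasurable hS.measurableSet)
    have hAae : AEMeasurable (fun p => ENNReal.ofReal (A p)) (volume.restrict S) := by
      refine ENNReal.measurable_ofReal.comp_aemeasurable
        (((hvae.mul hvae).const_mul (3 * R)).congr ?_)
      filter_upwards with p
      show 3 * R * (v p * v p) = A p
      simp only [hA]; ring
    calc ∫⁻ p in S, ENNReal.ofReal
          (((pdRho (fun r => r.1 / (m : ℝ) * v r) p) ^ 2
            + (pdZ (fun r => r.1 / (m : ℝ) * v r) p) ^ 2
            + (-(((m : ℝ) / p.1) * (p.1 / (m : ℝ) * v p))) ^ 2) * p.1)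
        ≤ ∫⁻ p in S, (ENNReal.ofReal (A p) + ENNReal.ofReal (B p)) := by
          refine lintegral_mono_ae
            ((ae_restrict_iff' hS.measurableSet).2 (ae_of_all _ fun p hp => ?_))
          obtain ⟨hp0, hpR⟩ := hSsub p hp
          have hd : DifferentiableAt ℝ v p :=
            ((hv.contDiffAt (hS.mem_nhds hp)).differentiableAt one_ne_zero)
          obtain ⟨h1, h2⟩ := pd_w (m : ℝ) v p hd
          rw [h1, h2]
          refine le_trans (ENNReal.ofReal_le_ofReal ?_) (ENNReal.ofReal_add_le)
          have h3 : (-(((m : ℝ) / p.1) * (p.1 / (m : ℝ) * v p))) ^ 2 = (v p) ^ 2 := by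
            field_simp
          rw [h3]
          set a := pdRho v p
          set b := pdZ v p
          have k1 : (v p / (m:ℝ) + p.1 / (m:ℝ) * a) ^ 2 ≤ 2 * (v p) ^ 2 + 2 * p.1 ^ 2 * a ^ 2 := by
            have e1 : (v p / (m:ℝ) + p.1 / (m:ℝ) * a) ^ 2 = (v p + p.1 * a) ^ 2 / (m:ℝ) ^ 2 := by
              ring
            rw [e1]
            calc (v p + p.1 * a) ^ 2 / (m:ℝ) ^ 2 ≤ (v p + p.1 * a) ^ 2 :=
                  div_le_self (by positivity) hmR
              _ ≤ 2 * (v p) ^ 2 + 2 * p.1 ^ 2 * a ^ 2 := by nlinarith [sq_nonneg (v p - p.1 * a)]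
          have k2 : (p.1 / (m:ℝ) * b) ^ 2 ≤ p.1 ^ 2 * b ^ 2 := by
            have e2 : (p.1 / (m:ℝ) * b) ^ 2 = p.1 ^ 2 * b ^ 2 / (m:ℝ) ^ 2 := by ring
            rw [e2]; exact div_le_self (by positivity) hmR
          have hp3 : p.1 ^ 3 ≤ R ^ 3 := pow_le_pow_left₀ hp0.le hpR.le 3
          simp only [hA, hB]
          nlinarith [mul_le_mul_of_nonneg_right k1 hp0.le,
            mul_le_mul_of_nonneg_right k2 hp0.le,
            mul_nonneg (sub_nonneg.2 hp3) (sq_nonneg a),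
            mul_nonneg (sub_nonneg.2 hp3) (sq_nonneg b),
            mul_nonneg (sub_nonneg.2 hpR.le) (sq_nonneg (v p))]
      _ = (∫⁻ p in S, ENNReal.ofReal (A p)) + ∫⁻ p in S, ENNReal.ofReal (B p) :=
          lintegral_add_left' hAae _
      _ ≤ ENNReal.ofReal (3 * R) * (∫⁻ p in S, ENNReal.ofReal ((v p) ^ 2))
          + ENNReal.ofReal (2 * R ^ 3)
            * ∫⁻ p in S, ENNReal.ofReal ((pdRho v p) ^ 2 + (pdZ v p) ^ 2) := by
          gcongr
          · rw [← lintegral_const_mul' _ _ (ENNReal.ofReal_ne_top : ENNReal.ofReal (3 * R) ≠ ⊤)]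
            refine lintegral_mono fun p => ?_
            rw [← ENNReal.ofReal_mul (by positivity)]
          · rw [← lintegral_const_mul' _ _ (ENNReal.ofReal_ne_top : ENNReal.ofReal (2 * R ^ 3) ≠ ⊤)]
            refine lintegral_mono fun p => ?_
            rw [← ENNReal.ofReal_mul (by positivity)]
end

section
/- Let m be a nonzero integer with |m| ≥ 1, R > 0, S an open subset of (0,R) × ℝ, and ṽ = (ṽ₁, ṽ₂, ṽ₃) : S → ℝ³ continuously differentiable on S. Let u = η_{m,1}^{-1}(ṽ) = ((ρ ṽ₁ − ṽ₃)/m, (ρ/m) ṽ₂, ṽ₃). Then, as inequalities of (possibly infinite) Lebesgue integrals of nonnegative measurable functions, ∫_S |u|² ρ dρ dz ≤ 2R³ ∫_S ṽ₁² dρ dz + R³ ∫_S ṽ₂² dρ dz + 3R ∫_S ṽ₃² dρ dz, and ∫_S |curl^m u|² ρ dρ dz ≤ 6R ∫_S (ṽ₁² + ṽ₂²) dρ dz + 4R³ ∫_S (∂_ρ ṽ₂ − ∂_z ṽ₁)² dρ dz + 4R ∫_S ((∂_ρ ṽ₃)² + (∂_z ṽ₃)²) dρ dz, where |·| denotes the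 Euclidean norm on ℝ³. (Conformity bound for the mode-m edge space: if (ṽ₁,ṽ₂) ∈ H(curl_sc; S) and ṽ₃ ∈ H¹(S), then η_{m,1}^{-1}(ṽ) lies in the weighted space H_ρ(curl^m; S).) -/
open MeasureTheory

lemma splitBound {S : Set (ℝ × ℝ)} (hS : MeasurableSet S) {F g1 g2 g3 : ℝ × ℝ → ℝ}
    (h1 : AEMeasurable (fun p => ENNReal.ofReal (g1 p)) (volume.restrict S))
    (h2 : AEMeasurable (fun p => ENNReal.ofReal (g2 p)) (volume.restrict S))
    (hpt : ∀ p ∈ S, F p ≤ g1 p + g2 p + g3 p) :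
    ∫⁻ p in S, ENNReal.ofReal (F p)
      ≤ (∫⁻ p in S, ENNReal.ofReal (g1 p)) + (∫⁻ p in S, ENNReal.ofReal (g2 p))
        + ∫⁻ p in S, ENNReal.ofReal (g3 p) := by
  calc ∫⁻ p in S, ENNReal.ofReal (F p)
      ≤ ∫⁻ p in S, (ENNReal.ofReal (g1 p) + ENNReal.ofReal (g2 p) + ENNReal.ofReal (g3 p)) := by
        refine setLIntegral_mono' hS fun p hp => ?_
        exact (ENNReal.ofReal_le_ofReal (hpt p hp)).trans
          (ENNReal.ofReal_add_le.trans (add_le_add ENNReal.ofReal_add_le le_rfl))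
    _ = _ := by
        have h12 : AEMeasurable (fun p => ENNReal.ofReal (g1 p) + ENNReal.ofReal (g2 p)) (volume.restrict S) := h1.add h2
        rw [lintegral_add_left' h12, lintegral_add_left' h1]

lemma constMul {S : Set (ℝ × ℝ)} {c : ℝ} (hc : 0 ≤ c) (f : ℝ × ℝ → ℝ) :
    ∫⁻ p in S, ENNReal.ofReal (c * f p)
      = ENNReal.ofReal c * ∫⁻ p in S, ENNReal.ofReal (f p) := by
  simp_rw [ENNReal.ofReal_mul hc]
  exact lintegral_const_mul' _ _ ENNReal.ofReal_ne_top

lemma pt1 {mR R ρ a b c : ℝ} (hm2 : 1 ≤ mR ^ 2) (h0 : 0 < ρ) (hρR : ρ < R) :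
    (((ρ * a - c) / mR) ^ 2 + (ρ / mR * b) ^ 2 + c ^ 2) * ρ
      ≤ 2 * R ^ 3 * a ^ 2 + R ^ 3 * b ^ 2 + 3 * R * c ^ 2 := by
  have hρ3 : ρ ^ 3 ≤ R ^ 3 := pow_le_pow_left₀ h0.le hρR.le 3
  have k1 : ((ρ * a - c) / mR) ^ 2 ≤ (ρ * a - c) ^ 2 := by
    rw [div_pow]; exact div_le_self (sq_nonneg _) hm2
  have k2 : (ρ / mR * b) ^ 2 ≤ (ρ * b) ^ 2 := by
    have h : ρ / mR * b = ρ * b / mR := by ring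
    rw [h, div_pow]; exact div_le_self (sq_nonneg _) hm2
  nlinarith [mul_le_mul_of_nonneg_right k1 h0.le, mul_le_mul_of_nonneg_right k2 h0.le,
    mul_nonneg h0.le (sq_nonneg (ρ * a + c)),
    mul_nonneg (sub_nonneg.2 hρ3) (sq_nonneg a),
    mul_nonneg (sub_nonneg.2 hρ3) (sq_nonneg b),
    mul_nonneg (sub_nonneg.2 hρR.le) (sq_nonneg c), sq_nonneg c]

lemma pt2 {mR R ρ a b c r z : ℝ} (hm2 : 1 ≤ mR ^ 2) (h0 : 0 < ρ) (hρR : ρ < R) :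
    ((-b - z) ^ 2 + (a + r) ^ 2 + ((-(ρ * c) - z - b) / mR) ^ 2) * ρ
      ≤ 6 * R * (a ^ 2 + b ^ 2) + 4 * R ^ 3 * c ^ 2 + 4 * R * (r ^ 2 + z ^ 2) := by
  have hρ3 : ρ ^ 3 ≤ R ^ 3 := pow_le_pow_left₀ h0.le hρR.le 3
  have k1 : ((-(ρ * c) - z - b) / mR) ^ 2 ≤ (ρ * c + z + b) ^ 2 := by
    rw [div_pow]
    calc (-(ρ * c) - z - b) ^ 2 / mR ^ 2 ≤ (-(ρ * c) - z - b) ^ 2 :=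
          div_le_self (sq_nonneg _) hm2
      _ = (ρ * c + z + b) ^ 2 := by ring
  have k2 : (ρ * c + z + b) ^ 2 ≤ 4 * (ρ * c) ^ 2 + 2 * z ^ 2 + 4 * b ^ 2 := by
    nlinarith [sq_nonneg (2 * (ρ * c) - z), sq_nonneg (2 * b - z), sq_nonneg (ρ * c - b)]
  nlinarith [mul_le_mul_of_nonneg_right (k1.trans k2) h0.le,
    mul_nonneg (sub_nonneg.2 hρ3) (sq_nonneg c),
    mul_nonneg (sub_nonneg.2 hρR.le) (sq_nonneg a),
    mul_nonneg (sub_nonneg.2 hρR.le) (sq_nonneg b),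
    mul_nonneg (sub_nonneg.2 hρR.le) (sq_nonneg z),
    mul_nonneg (sub_nonneg.2 hρR.le) (sq_nonneg r),
    mul_nonneg h0.le (sq_nonneg (b - z)), mul_nonneg h0.le (sq_nonneg (a - r)),
    mul_nonneg h0.le (sq_nonneg (b + z)), mul_nonneg h0.le (sq_nonneg (a + r))]

/-- Conformity bound for the mode-m edge space: weighted bounds for
`u = η_{m,1}^{-1}(ṽ)` and `curl^m u`. -/
theorem conformity_edge (m : ℤ) (hm : m ≠ 0) (hm' : 1 ≤ |m|) (R : ℝ) (hR : 0 < R)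
    (S : Set (ℝ × ℝ)) (hS : IsOpen S) (hSsub : ∀ p ∈ S, p.1 ∈ Set.Ioo 0 R)
    (v1 v2 v3 : ℝ × ℝ → ℝ)
    (hv1 : ContDiffOn ℝ 1 v1 S) (hv2 : ContDiffOn ℝ 1 v2 S) (hv3 : ContDiffOn ℝ 1 v3 S) :
    (∫⁻ p in S, ENNReal.ofReal
          ((((p.1 * v1 p - v3 p) / (m : ℝ)) ^ 2
            + (p.1 / (m : ℝ) * v2 p) ^ 2 + (v3 p) ^ 2) * p.1)
        ≤ ENNReal.ofReal (2 * R ^ 3) * (∫⁻ p in S, ENNReal.ofReal ((v1 p) ^ 2))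
          + ENNReal.ofReal (R ^ 3) * (∫⁻ p in S, ENNReal.ofReal ((v2 p) ^ 2))
          + ENNReal.ofReal (3 * R) * ∫⁻ p in S, ENNReal.ofReal ((v3 p) ^ 2))
    ∧ (∫⁻ p in S, ENNReal.ofReal
          (((-(((m : ℝ) / p.1) * (p.1 / (m : ℝ) * v2 p)) - pdZ v3 p) ^ 2
            + ((1 / p.1) * (pdRho (fun r => r.1 * v3 r) p
                + (m : ℝ) * ((p.1 * v1 p - v3 p) / (m : ℝ)))) ^ 2
            + (pdZ (fun r => (r.1 * v1 r - v3 r) / (m : ℝ)) p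
                - pdRho (fun r => r.1 / (m : ℝ) * v2 r) p) ^ 2) * p.1)
        ≤ ENNReal.ofReal (6 * R)
            * (∫⁻ p in S, ENNReal.ofReal ((v1 p) ^ 2 + (v2 p) ^ 2))
          + ENNReal.ofReal (4 * R ^ 3)
            * (∫⁻ p in S, ENNReal.ofReal ((pdRho v2 p - pdZ v1 p) ^ 2))
          + ENNReal.ofReal (4 * R)
            * ∫⁻ p in S, ENNReal.ofReal ((pdRho v3 p) ^ 2 + (pdZ v3 p) ^ 2)) := by
  have hSm : MeasurableSet S := hS.measurableSet
  have hmr : (m : ℝ) ≠ 0 := Int.cast_ne_zero.mpr hm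
  have hm2 : (1 : ℝ) ≤ (m : ℝ) ^ 2 := by
    have h : (1 : ℤ) ≤ m ^ 2 := by nlinarith [abs_nonneg m, sq_abs m, hm']
    exact_mod_cast h
  -- AEMeasurability of the continuous-on-S functions
  have a1 : AEMeasurable v1 (volume.restrict S) := hv1.continuousOn.aemeasurable hSm
  have a2 : AEMeasurable v2 (volume.restrict S) := hv2.continuousOn.aemeasurable hSm
  have a3 : AEMeasurable v3 (volume.restrict S) := hv3.continuousOn.aemeasurable hSm
  have sq1 : AEMeasurable (fun p => (v1 p) ^ 2) (volume.restrict S) := by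
    have h : AEMeasurable (fun p => v1 p * v1 p) (volume.restrict S) := a1.mul a1
    simpa [sq] using h
  have sq2 : AEMeasurable (fun p => (v2 p) ^ 2) (volume.restrict S) := by
    have h : AEMeasurable (fun p => v2 p * v2 p) (volume.restrict S) := a2.mul a2
    simpa [sq] using h
  have sq3 : AEMeasurable (fun p => (v3 p) ^ 2) (volume.restrict S) := by
    have h : AEMeasurable (fun p => v3 p * v3 p) (volume.restrict S) := a3.mul a3
    simpa [sq] using h
  have hcurl : ContinuousOn (fun p => pdRho v2 p - pdZ v1 p) S := by
    have c2 := hv2.continuousOn_fderiv_of_isOpen hS le_rfl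
    have c1 := hv1.continuousOn_fderiv_of_isOpen hS le_rfl
    exact ((ContinuousLinearMap.apply ℝ ℝ ((1:ℝ),(0:ℝ))).continuous.comp_continuousOn c2).sub
      ((ContinuousLinearMap.apply ℝ ℝ ((0:ℝ),(1:ℝ))).continuous.comp_continuousOn c1)
  have acurl : AEMeasurable (fun p => pdRho v2 p - pdZ v1 p) (volume.restrict S) :=
    hcurl.aemeasurable hSm
  constructor
  · have b1 := splitBound hSm (F := fun p =>
        (((p.1 * v1 p - v3 p) / (m : ℝ)) ^ 2 + (p.1 / (m : ℝ) * v2 p) ^ 2 + (v3 p) ^ 2) * p.1)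
      (g1 := fun p => 2 * R ^ 3 * (v1 p) ^ 2) (g2 := fun p => R ^ 3 * (v2 p) ^ 2)
      (g3 := fun p => 3 * R * (v3 p) ^ 2)
      ((sq1.const_mul _).ennreal_ofReal) ((sq2.const_mul _).ennreal_ofReal)
      (fun p hp => by
        obtain ⟨h0, hρR⟩ := hSsub p hp
        have := pt1 (mR := (m : ℝ)) (a := v1 p) (b := v2 p) (c := v3 p) hm2 h0 hρR
        linarith)
    calc _ ≤ _ := b1
      _ = _ := by
        rw [constMul (by positivity) (fun p => (v1 p) ^ 2),
          constMul (by positivity) (fun p => (v2 p) ^ 2),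
          constMul (by positivity) (fun p => (v3 p) ^ 2)]
  · have hpt : ∀ p ∈ S,
        ((-(((m : ℝ) / p.1) * (p.1 / (m : ℝ) * v2 p)) - pdZ v3 p) ^ 2
            + ((1 / p.1) * (pdRho (fun r => r.1 * v3 r) p
                + (m : ℝ) * ((p.1 * v1 p - v3 p) / (m : ℝ)))) ^ 2
            + (pdZ (fun r => (r.1 * v1 r - v3 r) / (m : ℝ)) p
                - pdRho (fun r => r.1 / (m : ℝ) * v2 r) p) ^ 2) * p.1
          ≤ 6 * R * ((v1 p) ^ 2 + (v2 p) ^ 2)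
            + 4 * R ^ 3 * (pdRho v2 p - pdZ v1 p) ^ 2
            + 4 * R * ((pdRho v3 p) ^ 2 + (pdZ v3 p) ^ 2) := by
      intro p hp
      obtain ⟨h0, hρR⟩ := hSsub p hp
      have hρ : p.1 ≠ 0 := ne_of_gt h0
      have hd1 : DifferentiableAt ℝ v1 p :=
        (hv1.differentiableOn one_ne_zero).differentiableAt (hS.mem_nhds hp)
      have hd2 : DifferentiableAt ℝ v2 p :=
        (hv2.differentiableOn one_ne_zero).differentiableAt (hS.mem_nhds hp)
      have hd3 : DifferentiableAt ℝ v3 p :=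
        (hv3.differentiableOn one_ne_zero).differentiableAt (hS.mem_nhds hp)
      have hfst : DifferentiableAt ℝ (fun r : ℝ × ℝ => r.1) p := differentiableAt_fst
      have e1 : pdRho (fun r => r.1 * v3 r) p = v3 p + p.1 * pdRho v3 p := by
        simp [pdRho, fderiv_fun_mul hfst hd3, fderiv_fst]; ring
      have e2 : pdZ (fun r => (r.1 * v1 r - v3 r) / (m : ℝ)) p
          = (p.1 * pdZ v1 p - pdZ v3 p) / (m : ℝ) := by
        simp only [pdZ, div_eq_mul_inv, fderiv_mul_const (c := fun r : ℝ × ℝ => r.1 * v1 r - v3 r) ((hfst.mul hd1).sub hd3),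
          fderiv_fun_sub (f := fun r : ℝ × ℝ => r.1 * v1 r) (g := v3) (hfst.mul hd1) hd3,
          fderiv_fun_mul (c := fun r : ℝ × ℝ => r.1) (d := v1) hfst hd1, fderiv_fst]
        simp
        ring
      have e3 : pdRho (fun r => r.1 / (m : ℝ) * v2 r) p
          = (v2 p + p.1 * pdRho v2 p) / (m : ℝ) := by
        simp only [pdRho, div_eq_mul_inv, fderiv_fun_mul (c := fun r : ℝ × ℝ => r.1 * (m:ℝ)⁻¹) (hfst.mul_const _) hd2,
          fderiv_mul_const (c := fun r : ℝ × ℝ => r.1) hfst ((m:ℝ)⁻¹), fderiv_fst]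
        simp
        ring
      have A : -(((m : ℝ) / p.1) * (p.1 / (m : ℝ) * v2 p)) - pdZ v3 p
          = -(v2 p) - pdZ v3 p := by field_simp
      have B : (1 / p.1) * (pdRho (fun r => r.1 * v3 r) p
          + (m : ℝ) * ((p.1 * v1 p - v3 p) / (m : ℝ)))
          = v1 p + pdRho v3 p := by
        rw [e1, mul_div_cancel₀ _ hmr]; field_simp; ring
      have C : pdZ (fun r => (r.1 * v1 r - v3 r) / (m : ℝ)) p
            - pdRho (fun r => r.1 / (m : ℝ) * v2 r) p
          = (-(p.1 * (pdRho v2 p - pdZ v1 p)) - pdZ v3 p - v2 p) / (m : ℝ) := by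
        rw [e2, e3]; ring
      rw [A, B, C]
      have := pt2 (mR := (m : ℝ)) (R := R) (ρ := p.1) (a := v1 p) (b := v2 p)
        (c := pdRho v2 p - pdZ v1 p) (r := pdRho v3 p) (z := pdZ v3 p) hm2 h0 hρR
      linarith
    have b2 := splitBound hSm
      (g1 := fun p => 6 * R * ((v1 p) ^ 2 + (v2 p) ^ 2))
      (g2 := fun p => 4 * R ^ 3 * (pdRho v2 p - pdZ v1 p) ^ 2)
      (g3 := fun p => 4 * R * ((pdRho v3 p) ^ 2 + (pdZ v3 p) ^ 2))
      (((sq1.add sq2).const_mul _).ennreal_ofReal)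
      (((by have h : AEMeasurable (fun p => (pdRho v2 p - pdZ v1 p) * (pdRho v2 p - pdZ v1 p)) (volume.restrict S) := acurl.mul acurl; simpa [sq] using h : AEMeasurable
          (fun p => (pdRho v2 p - pdZ v1 p) ^ 2) (volume.restrict S)).const_mul
        _).ennreal_ofReal)
      hpt
    calc _ ≤ _ := b2
      _ = _ := by
        rw [constMul (by positivity) (fun p => (v1 p) ^ 2 + (v2 p) ^ 2),
          constMul (by positivity) (fun p => (pdRho v2 p - pdZ v1 p) ^ 2),
          constMul (by positivity) (fun p => (pdRho v3 p) ^ 2 + (pdZ v3 p) ^ 2)]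
end

section
/- Let m be a nonzero integer with |m| ≥ 1, R > 0, S an open subset of (0,R) × ℝ, and ṽ = (ṽ₁, ṽ₂, ṽ₃) : S → ℝ³ with ṽ₁, ṽ₂ continuously differentiable on S. Let u = η_{m,2}^{-1}(ṽ) = (ṽ₁, ṽ₂, (ρ ṽ₃ + ṽ₁)/m). Then, as inequalities of (possibly infinite) Lebesgue integrals of nonnegative measurable functions, ∫_S |u|² ρ dρ dz ≤ 3R ∫_S (ṽ₁² + ṽ₂²) dρ dz + 2R³ ∫_S ṽ₃² dρ dz, and ∫_S (div^m u)² ρ dρ dz ≤ 2R ∫_S (∂_ρ ṽ₁ + ∂_z ṽ₂)² dρ dz + 2R ∫_S ṽ₃² dρ dz, where |·| denotes the Euclidean norm on ℝ³. (Conformity bound for the mode-m face space: if (ṽ₁,ṽ₂) ∈ H(div; S) and ṽ₃ ∈ L²(S), then η_{m,2}^{-1}(ṽ) lies in the weighted space H_ρ(div^m; S).) -/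
open MeasureTheory

/-- Key abstract estimate: if `h ≤ c*f + d*g` pointwise a.e. and `f` is
a.e.-measurable, the lintegral of `h` splits accordingly. -/
lemma key_est {α : Type*} [MeasurableSpace α] (μ : Measure α)
    (f g h : α → ℝ) (c d : ℝ) (hc : 0 ≤ c) (hd : 0 ≤ d)
    (hf : AEMeasurable f μ)
    (hle : ∀ᵐ p ∂μ, h p ≤ c * f p + d * g p) (hfg : ∀ p, 0 ≤ f p) :
    ∫⁻ p, ENNReal.ofReal (h p) ∂μ
      ≤ ENNReal.ofReal c * ∫⁻ p, ENNReal.ofReal (f p) ∂μ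
        + ENNReal.ofReal d * ∫⁻ p, ENNReal.ofReal (g p) ∂μ := by
  calc ∫⁻ p, ENNReal.ofReal (h p) ∂μ
      ≤ ∫⁻ p, (ENNReal.ofReal (c * f p) + ENNReal.ofReal (d * g p)) ∂μ := by
        refine lintegral_mono_ae (hle.mono fun p hp => ?_)
        calc ENNReal.ofReal (h p) ≤ ENNReal.ofReal (c * f p + d * g p) :=
              ENNReal.ofReal_le_ofReal hp
          _ ≤ _ := ENNReal.ofReal_add_le
    _ = (∫⁻ p, ENNReal.ofReal (c * f p) ∂μ) + ∫⁻ p, ENNReal.ofReal (d * g p) ∂μ := by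
        refine lintegral_add_left' ?_ _
        exact (ENNReal.measurable_ofReal.comp_aemeasurable (hf.const_mul c))
    _ = ENNReal.ofReal c * ∫⁻ p, ENNReal.ofReal (f p) ∂μ
        + ENNReal.ofReal d * ∫⁻ p, ENNReal.ofReal (g p) ∂μ := by
        congr 1
        · simp_rw [ENNReal.ofReal_mul hc]
          exact lintegral_const_mul' _ _ ENNReal.ofReal_ne_top
        · simp_rw [ENNReal.ofReal_mul hd]
          exact lintegral_const_mul' _ _ ENNReal.ofReal_ne_top

/-- Conformity bound for the mode-m face space: weighted bounds for
`u = η_{m,2}^{-1}(ṽ)` and `div^m u`. -/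
theorem conformity_face (m : ℤ) (hm : m ≠ 0) (hm' : 1 ≤ |m|) (R : ℝ) (hR : 0 < R)
    (S : Set (ℝ × ℝ)) (hS : IsOpen S) (hSsub : ∀ p ∈ S, p.1 ∈ Set.Ioo 0 R)
    (v1 v2 v3 : ℝ × ℝ → ℝ)
    (hv1 : ContDiffOn ℝ 1 v1 S) (hv2 : ContDiffOn ℝ 1 v2 S) :
    (∫⁻ p in S, ENNReal.ofReal
          (((v1 p) ^ 2 + (v2 p) ^ 2 + ((p.1 * v3 p + v1 p) / (m : ℝ)) ^ 2) * p.1)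
        ≤ ENNReal.ofReal (3 * R)
            * (∫⁻ p in S, ENNReal.ofReal ((v1 p) ^ 2 + (v2 p) ^ 2))
          + ENNReal.ofReal (2 * R ^ 3) * ∫⁻ p in S, ENNReal.ofReal ((v3 p) ^ 2))
    ∧ (∫⁻ p in S, ENNReal.ofReal
          (((1 / p.1) * pdRho (fun r => r.1 * v1 r) p
              - ((m : ℝ) / p.1) * ((p.1 * v3 p + v1 p) / (m : ℝ)) + pdZ v2 p) ^ 2 * p.1)
        ≤ ENNReal.ofReal (2 * R)
            * (∫⁻ p in S, ENNReal.ofReal ((pdRho v1 p + pdZ v2 p) ^ 2))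
          + ENNReal.ofReal (2 * R) * ∫⁻ p in S, ENNReal.ofReal ((v3 p) ^ 2)) := by
  have hmR : (1 : ℝ) ≤ |(m : ℝ)| := by exact_mod_cast hm'
  have hm0 : (m : ℝ) ≠ 0 := by exact_mod_cast hm
  have hSm : MeasurableSet S := hS.measurableSet
  constructor
  · refine key_est _ _ _ _ (3 * R) (2 * R ^ 3) (by positivity) (by positivity)
      ?_ ?_ (fun p => by positivity)
    · exact ((hv1.continuousOn.pow 2).add (hv2.continuousOn.pow 2)).aemeasurable hSm
    · refine (ae_restrict_iff' hSm).2 (Filter.Eventually.of_forall fun p hp => ?_)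
      obtain ⟨h0, h1⟩ := hSsub p hp
      have hsq : ((p.1 * v3 p + v1 p) / (m : ℝ)) ^ 2 ≤ (p.1 * v3 p + v1 p) ^ 2 := by
        rw [div_pow]
        have : (1:ℝ) ≤ (m:ℝ)^2 := by
          have := sq_abs (m:ℝ); nlinarith
        rw [div_le_iff₀ (by nlinarith)]
        nlinarith [sq_nonneg (p.1 * v3 p + v1 p)]
      have h2 : (p.1 * v3 p + v1 p) ^ 2 ≤ 2 * p.1 ^ 2 * (v3 p) ^ 2 + 2 * (v1 p) ^ 2 := by
        nlinarith [sq_nonneg (p.1 * v3 p - v1 p)]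
      have hq : ((p.1 * v3 p + v1 p) / (m : ℝ)) ^ 2
          ≤ 2 * p.1 ^ 2 * (v3 p) ^ 2 + 2 * (v1 p) ^ 2 := hsq.trans h2
      have h3 : p.1 ^ 3 ≤ R ^ 3 := pow_le_pow_left₀ h0.le h1.le 3
      nlinarith [mul_le_mul_of_nonneg_right hq h0.le,
        mul_le_mul_of_nonneg_left h3 (sq_nonneg (v3 p)),
        mul_le_mul_of_nonneg_left h1.le (sq_nonneg (v1 p)),
        mul_le_mul_of_nonneg_left h1.le (sq_nonneg (v2 p)),
        sq_nonneg (v1 p), sq_nonneg (v2 p), hR.le]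
  · refine key_est _ _ _ _ (2 * R) (2 * R) (by positivity) (by positivity) ?_ ?_
      (fun p => sq_nonneg _)
    · have hcont : ContinuousOn (fun p => (pdRho v1 p + pdZ v2 p) ^ 2) S := by
        have c1 : ContinuousOn (fun p => fderiv ℝ v1 p) S :=
          hv1.continuousOn_fderiv_of_isOpen hS le_rfl
        have c2 : ContinuousOn (fun p => fderiv ℝ v2 p) S :=
          hv2.continuousOn_fderiv_of_isOpen hS le_rfl
        exact (((c1.clm_apply continuousOn_const).add
          (c2.clm_apply continuousOn_const)).pow 2)
      exact hcont.aemeasurable hSm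
    · refine (ae_restrict_iff' hSm).2 (Filter.Eventually.of_forall fun p hp => ?_)
      obtain ⟨h0, h1⟩ := hSsub p hp
      have hd1 : DifferentiableAt ℝ v1 p :=
        (hv1.differentiableOn one_ne_zero).differentiableAt (hS.mem_nhds hp)
      have hfst : DifferentiableAt ℝ (fun r : ℝ × ℝ => r.1) p := differentiable_fst.differentiableAt
      have hprod : pdRho (fun r => r.1 * v1 r) p = v1 p + p.1 * pdRho v1 p := by
        unfold pdRho
        rw [fderiv_fun_mul hfst hd1]
        simp [fderiv_fst]
        ring
      rw [hprod]
      have hexpr : (1 / p.1) * (v1 p + p.1 * pdRho v1 p)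
          - ((m : ℝ) / p.1) * ((p.1 * v3 p + v1 p) / (m : ℝ)) + pdZ v2 p
          = pdRho v1 p + pdZ v2 p - v3 p := by
        field_simp
        ring
      rw [hexpr]
      have h2 : (pdRho v1 p + pdZ v2 p - v3 p) ^ 2
          ≤ 2 * (pdRho v1 p + pdZ v2 p) ^ 2 + 2 * (v3 p) ^ 2 := by
        nlinarith [sq_nonneg (pdRho v1 p + pdZ v2 p + v3 p)]
      nlinarith [mul_le_mul_of_nonneg_right h2 h0.le, sq_nonneg (pdRho v1 p + pdZ v2 p),
        sq_nonneg (v3 p), mul_le_mul_of_nonneg_left h1.le (sq_nonneg (pdRho v1 p + pdZ v2 p)),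
        mul_le_mul_of_nonneg_left h1.le (sq_nonneg (v3 p))]
end
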